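/- Let X be a k-regular loopless graph on n vertices with least adjacency eigenvalue τ, and let S be an independent set with |S| = n·(−τ)/(k − τ) (equality in the Delsarte–Hoffman bound). Then every vertex not in S has exactly −τ neighbours in S, and every vertex in S has k neighbours outside S; i.e., the partition {S, V∖S} is equitable. -/

import Mathlib

open Matrix Finset

/-- Equality in the Delsarte–Hoffman bound: every vertex outside `S` has exactly `−τ`
neighbours in `S`, and every vertex in `S` has `k` neighbours outside `S`;
the partition `{S, V∖S}` is equitable. -/
theorem stmt8 (n k : ℕ) (hn : 0 < n)
    (A : Matrix (Fin n) (Fin n) ℝ) (hsym : A.IsSymm)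
    (h01 : ∀ i j, A i j = 0 ∨ A i j = 1) (hloop : ∀ i, A i i = 0)
    (hreg : ∀ i, ∑ j, A i j = k)
    (τ : ℝ) (hτneg : τ < 0)
    (hτeig : ∃ v : Fin n → ℝ, v ≠ 0 ∧ A.mulVec v = τ • v)
    (hτmin : ∀ (μ : ℝ) (v : Fin n → ℝ), v ≠ 0 → A.mulVec v = μ • v → τ ≤ μ)
    (S : Finset (Fin n)) (hind : ∀ i ∈ S, ∀ j ∈ S, i ≠ j → A i j = 0)
    (heq : (S.card : ℝ) = n * (-τ) / ((k : ℝ) - τ)) :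
    (∀ i ∉ S, ∑ j ∈ S, A i j = -τ) ∧ (∀ i ∈ S, ∑ j ∈ Sᶜ, A i j = k) := by
  classical
  have hA : A.IsHermitian := by
    rw [Matrix.IsHermitian, Matrix.conjTranspose]
    ext i j
    simpa using hsym.apply i j
  have hnR : (0:ℝ) < n := by exact_mod_cast hn
  have hkτ : (0:ℝ) < (k:ℝ) - τ := by
    have : (0:ℝ) ≤ k := Nat.cast_nonneg k
    linarith
  set s : ℝ := (S.card : ℝ) with hs_def
  have hs : ((k:ℝ) - τ) * s = n * (-τ) := by
    rw [heq]
    field_simp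
  have hsn : s / n * ((k:ℝ) - τ) = -τ := by
    field_simp
    linarith [hs]
  -- B = A - τ I is positive semidefinite
  set B : Matrix (Fin n) (Fin n) ℝ := A - τ • 1 with hB_def
  have hB_herm : B.IsHermitian := by
    apply Matrix.IsHermitian.sub hA
    simp [Matrix.IsHermitian]
  have hB : B.PosSemidef := by
    apply hB_herm.posSemidef_iff_eigenvalues_nonneg.mpr
    intro i
    set v := ⇑(hB_herm.eigenvectorBasis i) with hv_def
    have hv0 : v ≠ 0 := by
      intro h
      apply hB_herm.eigenvectorBasis.orthonormal.ne_zero i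
      rw [← WithLp.toLp_ofLp (x := hB_herm.eigenvectorBasis i), ← hv_def, h]
      simp
    have hBv : B *ᵥ v = hB_herm.eigenvalues i • v := hB_herm.mulVec_eigenvectorBasis i
    have hAv : A *ᵥ v = (hB_herm.eigenvalues i + τ) • v := by
      have : A *ᵥ v - τ • v = hB_herm.eigenvalues i • v := by
        rw [← hBv, hB_def]
        simp [Matrix.sub_mulVec, Matrix.smul_mulVec]
      rw [sub_eq_iff_eq_add] at this
      rw [this, add_smul]
    have := hτmin _ v hv0 hAv
    simp only [Pi.zero_apply]
    linarith
  -- the shifted indicator vector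
  set χ : Fin n → ℝ := fun i => if i ∈ S then 1 else 0 with hχ_def
  set one : Fin n → ℝ := fun _ => 1 with hone_def
  set u : Fin n → ℝ := χ - (s / n) • one with hu_def
  -- basic computations
  have hAχ : A *ᵥ χ = fun i => ∑ j ∈ S, A i j := by
    funext i
    simp only [Matrix.mulVec, dotProduct, hχ_def, mul_ite, mul_one, mul_zero]
    rw [Finset.sum_ite_mem, Finset.univ_inter]
  have hAone : A *ᵥ one = fun _ => (k:ℝ) := by
    funext i
    simp only [Matrix.mulVec, dotProduct, hone_def, mul_one]
    exact hreg i
  have hχχ : χ ⬝ᵥ χ = s := by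
    simp only [dotProduct, hχ_def, ite_mul, one_mul, zero_mul]
    rw [Finset.sum_ite_mem, Finset.univ_inter, hs_def]
    simp
  have hχone : χ ⬝ᵥ one = s := by
    simp only [dotProduct, hχ_def, hone_def, ite_mul, one_mul, zero_mul, mul_one]
    rw [Finset.sum_ite_mem, Finset.univ_inter, hs_def]
    simp
  have honeone : one ⬝ᵥ one = (n:ℝ) := by
    simp [dotProduct, hone_def]
  have hcol : ∀ j, ∑ i, A i j = (k:ℝ) := by
    intro j
    have : ∀ i, A i j = A j i := fun i => (hsym.apply i j).symm ▸ rfl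
    calc ∑ i, A i j = ∑ i, A j i := by
          refine Finset.sum_congr rfl fun i _ => ?_
          have := congrFun (congrFun hsym j) i
          simpa [Matrix.transpose_apply] using this
      _ = k := hreg j
  have hχAχ : χ ⬝ᵥ (A *ᵥ χ) = 0 := by
    rw [hAχ]
    simp only [dotProduct, hχ_def, ite_mul, one_mul, zero_mul]
    rw [Finset.sum_ite_mem, Finset.univ_inter]
    apply Finset.sum_eq_zero
    intro i hi
    apply Finset.sum_eq_zero
    intro j hj
    rcases eq_or_ne i j with rfl | hne
    · exact hloop i
    · exact hind i hi j hj hne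
  have honeAχ : one ⬝ᵥ (A *ᵥ χ) = (k:ℝ) * s := by
    rw [hAχ]
    simp only [dotProduct, hone_def, one_mul]
    refine (Finset.sum_comm).trans ?_
    rw [Finset.sum_congr rfl fun j _ => hcol j]
    rw [hs_def]
    simp [mul_comm]
  have hχAone : χ ⬝ᵥ (A *ᵥ one) = s * k := by
    rw [hAone]
    simp only [dotProduct, hχ_def, ite_mul, one_mul, zero_mul]
    rw [Finset.sum_ite_mem, Finset.univ_inter, hs_def]
    simp [mul_comm]
  have honeAone : one ⬝ᵥ (A *ᵥ one) = (n:ℝ) * k := by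
    rw [hAone]
    simp [dotProduct, hone_def]
  -- quadratic form of B at u is zero
  have hAu : A *ᵥ u = (A *ᵥ χ) - (s / n) • (A *ᵥ one) := by
    rw [hu_def, Matrix.mulVec_sub, Matrix.mulVec_smul]
  have hquadA : u ⬝ᵥ (A *ᵥ u) = -((k:ℝ) * s * s / n) := by
    rw [hAu, hu_def]
    rw [sub_dotProduct, smul_dotProduct]
    rw [dotProduct_sub, dotProduct_sub, dotProduct_smul,
      dotProduct_smul]
    rw [hχAχ, hχAone, honeAχ, honeAone]
    simp only [smul_eq_mul]; field_simp
    ring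
  have huu : u ⬝ᵥ u = s - s * s / n := by
    rw [hu_def]
    rw [sub_dotProduct, smul_dotProduct, dotProduct_sub,
      dotProduct_sub, dotProduct_smul, dotProduct_smul]
    have honeχ : one ⬝ᵥ χ = s := by
      simp only [dotProduct, hone_def, hχ_def, one_mul, mul_ite, mul_one, mul_zero]
      rw [Finset.sum_ite_mem, Finset.univ_inter, hs_def]
      simp
    rw [hχχ, hχone, honeχ, honeone]
    simp only [smul_eq_mul]; field_simp
    ring
  have hBu_quad : u ⬝ᵥ (B *ᵥ u) = 0 := by
    rw [hB_def, Matrix.sub_mulVec, Matrix.smul_mulVec, Matrix.one_mulVec,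
      dotProduct_sub, dotProduct_smul, hquadA, huu, smul_eq_mul]
    have h4 : -((k:ℝ) * s * s / n) - τ * (s - s * s / n)
        = -s * (s / n * ((k:ℝ) - τ)) - τ * s := by
      field_simp
      ring
    rw [h4, hsn]
    ring
  have hBu : B *ᵥ u = 0 := by
    have := (hB.dotProduct_mulVec_zero_iff u).mp (by simpa using hBu_quad)
    exact this
  -- extract A *ᵥ u = τ • u and read off entries
  have hAuτ : A *ᵥ u = τ • u := by
    have h : A *ᵥ u - τ • u = 0 := by
      rw [← hBu, hB_def, Matrix.sub_mulVec, Matrix.smul_mulVec, Matrix.one_mulVec]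
    rw [sub_eq_zero] at h
    exact h
  have key : ∀ i, ∑ j ∈ S, A i j = τ * (if i ∈ S then 1 else 0) + (-τ) := by
    intro i
    have h := congrFun hAuτ i
    rw [hAu, hAχ, hAone] at h
    simp only [hu_def, hχ_def, hone_def, Pi.sub_apply, Pi.smul_apply, smul_eq_mul] at h
    have : ∑ j ∈ S, A i j = τ * ((if i ∈ S then 1 else 0) - s / n) + s / n * k := by
      linarith [h]
    rw [this]
    have : τ * ((if i ∈ S then (1:ℝ) else 0) - s / n) + s / n * k
        = τ * (if i ∈ S then (1:ℝ) else 0) + s / n * ((k:ℝ) - τ) := by ring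
    rw [this, hsn]
  constructor
  · intro i hi
    have := key i
    rw [if_neg hi] at this
    linarith [this]
  · intro i hi
    have h0 : ∑ j ∈ S, A i j = 0 := by
      have := key i
      rw [if_pos hi] at this
      linarith [this]
    have hsplit : ∑ j ∈ S, A i j + ∑ j ∈ Sᶜ, A i j = ∑ j, A i j :=
      Finset.sum_add_sum_compl S _
    rw [hreg i] at hsplit
    linarith [hsplit]
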